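/- Let β > 0, ν > 0 and ε > 0, and define the space 𝒲_ε = { x = (x_n)_{n≥1} : ‖x‖_{𝒲_ε} := sup_{n≥1} (λ_n^{β-2+ε} |x_n|) < ∞ }. For every initial condition x ∈ 𝒲_ε there exist T > 0 and a weak solution X of the viscous dyadic model on [0,T] with initial condition x such that sup_{t∈[0,T]} ‖X(t)‖_{𝒲_ε} < ∞, and X is the unique weak solution on [0,T] with initial condition x satisfying this bound. -/

import Mathlib

/-- The dyadic frequencies: `λ_0 = 0`, `λ_n = 2^n` for `n ≥ 1`. -/
noncomputable def lam (n : ℕ) : ℝ := if n = 0 then 0 else 2 ^ n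



open Set Filter MeasureTheory intervalIntegral Real

/-- `E2 r = 2^r`. -/
noncomputable def E2 (r : ℝ) : ℝ := (2:ℝ) ^ r

lemma E2_pos (r : ℝ) : 0 < E2 r := Real.rpow_pos_of_pos two_pos r

lemma E2_nonneg (r : ℝ) : 0 ≤ E2 r := (E2_pos r).le

lemma E2_add (r s : ℝ) : E2 (r + s) = E2 r * E2 s := Real.rpow_add two_pos r s

lemma E2_mono {r s : ℝ} (h : r ≤ s) : E2 r ≤ E2 s :=
  Real.rpow_le_rpow_of_exponent_le one_le_two h

lemma E2_two : E2 2 = 4 := by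
  have : ((2:ℝ):ℝ) = ((2:ℕ):ℝ) := by norm_num
  rw [E2, this, Real.rpow_natCast]; norm_num

lemma lam_eq {n : ℕ} (hn : 1 ≤ n) : lam n = 2 ^ n := by
  simp [lam, Nat.one_le_iff_ne_zero.mp hn]

lemma lam_pos {n : ℕ} (hn : 1 ≤ n) : 0 < lam n := by
  rw [lam_eq hn]; positivity

lemma lam_rpow {n : ℕ} (hn : 1 ≤ n) (y : ℝ) : lam n ^ y = E2 (n * y) := by
  rw [lam_eq hn, E2, ← Real.rpow_natCast (2:ℝ) n, ← Real.rpow_mul (by norm_num)]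

lemma lam_zero : lam 0 = 0 := by simp [lam]

lemma lam_sq {n : ℕ} (hn : 1 ≤ n) : lam n ^ (2:ℕ) = E2 (n * 2) := by
  have := lam_rpow hn 2
  rw [← this]
  rw [show ((2:ℝ)) = ((2:ℕ):ℝ) by norm_num, Real.rpow_natCast]

/-- the weight `λ_n^{β-2+ε}`. -/
noncomputable def wt (β ε : ℝ) (n : ℕ) : ℝ := lam n ^ (β - 2 + ε)

lemma wt_eq {β ε : ℝ} {n : ℕ} (hn : 1 ≤ n) : wt β ε n = E2 (n * (β - 2 + ε)) :=
  lam_rpow hn _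

lemma wt_pos {β ε : ℝ} {n : ℕ} (hn : 1 ≤ n) : 0 < wt β ε n := by
  rw [wt_eq hn]; exact E2_pos _

/-- the nonlinearity. -/
noncomputable def Fn (β : ℝ) (X : ℕ → ℝ → ℝ) (n : ℕ) (t : ℝ) : ℝ :=
  lam (n-1) ^ β * (X (n-1) t)^2 - lam n ^ β * X n t * X (n+1) t

lemma Fn_zero (β : ℝ) (n : ℕ) (t : ℝ) : Fn β (fun _ _ => 0) n t = 0 := by
  simp [Fn]

lemma lam_nonneg (n : ℕ) : 0 ≤ lam n := by
  cases n with
  | zero => rw [lam_zero]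
  | succ m => exact (lam_pos (by omega)).le

lemma E2_neg (r : ℝ) : E2 (-r) = (E2 r)⁻¹ := Real.rpow_neg (by norm_num) r

lemma bound_of_wt {β ε R : ℝ} {u : ℝ} {m : ℕ} (hm : 1 ≤ m)
    (h : wt β ε m * |u| ≤ R) : |u| ≤ R * E2 (-(m * (β - 2 + ε))) := by
  have hw : (0:ℝ) < E2 (m * (β - 2 + ε)) := E2_pos _
  rw [wt_eq hm] at h
  have h2 : |u| ≤ R / E2 (m * (β - 2 + ε)) := by
    rw [le_div_iff₀ hw]; linarith [h, mul_comm (E2 ((m:ℝ) * (β - 2 + ε))) |u|]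
  rwa [div_eq_mul_inv, ← E2_neg] at h2

lemma Fn_lip (β ε : ℝ) (hβ : 0 < β) (hε : 0 < ε) (X Y : ℕ → ℝ → ℝ) (t R D : ℝ)
    (hR : 0 ≤ R) (hD : 0 ≤ D)
    (hX : ∀ m, 1 ≤ m → wt β ε m * |X m t| ≤ R)
    (hY : ∀ m, 1 ≤ m → wt β ε m * |Y m t| ≤ R)
    (hXY : ∀ m, 1 ≤ m → wt β ε m * |X m t - Y m t| ≤ D)
    {n : ℕ} (hn : 1 ≤ n) :
    wt β ε n * |Fn β X n t - Fn β Y n t| ≤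
      2 * (E2 (β + 2*ε) + 4) * R * D * E2 (n * (2 - ε)) := by
  have hp1 : ((n - 1 : ℕ) : ℝ) = (n:ℝ) - 1 := by
    rw [Nat.cast_sub hn]; norm_num
  have hp2 : ((n + 1 : ℕ) : ℝ) = (n:ℝ) + 1 := by push_cast; ring
  have hl1 : 0 ≤ lam (n-1) ^ β := Real.rpow_nonneg (lam_nonneg _) _
  have hl2 : 0 ≤ lam n ^ β := Real.rpow_nonneg (lam_nonneg _) _
  have hid : Fn β X n t - Fn β Y n t =
      lam (n-1) ^ β * ((X (n-1) t + Y (n-1) t) * (X (n-1) t - Y (n-1) t))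
      - lam n ^ β * (X n t * (X (n+1) t - Y (n+1) t) + Y (n+1) t * (X n t - Y n t)) := by
    unfold Fn; ring
  have key : |Fn β X n t - Fn β Y n t| ≤
      lam (n-1) ^ β * ((|X (n-1) t| + |Y (n-1) t|) * |X (n-1) t - Y (n-1) t|)
      + lam n ^ β * (|X n t| * |X (n+1) t - Y (n+1) t| + |Y (n+1) t| * |X n t - Y n t|) := by
    rw [hid]
    refine (abs_sub _ _).trans ?_
    simp only [abs_mul, abs_of_nonneg hl1, abs_of_nonneg hl2]
    refine add_le_add (mul_le_mul_of_nonneg_left ?_ hl1) (mul_le_mul_of_nonneg_left ?_ hl2)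
    · exact mul_le_mul_of_nonneg_right (abs_add_le _ _) (abs_nonneg _)
    · exact (abs_add_le _ _).trans (le_of_eq (by rw [abs_mul, abs_mul]))
  have T1 : lam (n-1) ^ β * ((|X (n-1) t| + |Y (n-1) t|) * |X (n-1) t - Y (n-1) t|) ≤
      E2 (((n:ℝ)-1)*β) * ((2*R*E2 (-(((n:ℝ)-1)*(β - 2 + ε)))) * (D * E2 (-(((n:ℝ)-1)*(β - 2 + ε))))) := by
    rcases eq_or_lt_of_le hn with h1 | h2
    · have hz : n - 1 = 0 := by omega
      rw [hz, lam_zero, Real.zero_rpow hβ.ne', zero_mul]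
      have a1 : (0:ℝ) ≤ 2*R*E2 (-(((n:ℝ)-1)*(β - 2 + ε))) := by
        have := E2_nonneg (-(((n:ℝ)-1)*(β - 2 + ε))); nlinarith
      have a2 : (0:ℝ) ≤ D * E2 (-(((n:ℝ)-1)*(β - 2 + ε))) := mul_nonneg hD (E2_nonneg _)
      exact mul_nonneg (E2_nonneg _) (mul_nonneg a1 a2)
    · have hm : 1 ≤ n - 1 := by omega
      have e1 : lam (n-1) ^ β = E2 (((n:ℝ)-1)*β) := by rw [lam_rpow hm, hp1]
      rw [e1]
      refine mul_le_mul_of_nonneg_left ?_ (E2_nonneg _)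
      have b1 := bound_of_wt hm (hX _ hm)
      have b2 := bound_of_wt hm (hY _ hm)
      have b3 := bound_of_wt hm (hXY _ hm)
      rw [hp1] at b1 b2 b3
      refine mul_le_mul ?_ b3 (abs_nonneg _) ?_
      · calc |X (n-1) t| + |Y (n-1) t|
            ≤ R * E2 (-(((n:ℝ)-1)*(β - 2 + ε))) + R * E2 (-(((n:ℝ)-1)*(β - 2 + ε))) :=
              add_le_add b1 b2
          _ = 2*R*E2 (-(((n:ℝ)-1)*(β - 2 + ε))) := by ring
      · have := E2_nonneg (-(((n:ℝ)-1)*(β - 2 + ε))); nlinarith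
  have T2 : lam n ^ β * (|X n t| * |X (n+1) t - Y (n+1) t| + |Y (n+1) t| * |X n t - Y n t|) ≤
      E2 ((n:ℝ)*β) * ((R * E2 (-((n:ℝ)*(β - 2 + ε)))) * (D * E2 (-(((n:ℝ)+1)*(β - 2 + ε))))
        + (R * E2 (-(((n:ℝ)+1)*(β - 2 + ε)))) * (D * E2 (-((n:ℝ)*(β - 2 + ε))))) := by
    rw [lam_rpow hn]
    refine mul_le_mul_of_nonneg_left ?_ (E2_nonneg _)
    have hm1 : 1 ≤ n + 1 := by omega
    have b3 := bound_of_wt hn (hX n hn)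
    have b4 := bound_of_wt hm1 (hXY _ hm1)
    have b5 := bound_of_wt hm1 (hY _ hm1)
    have b6 := bound_of_wt hn (hXY n hn)
    rw [hp2] at b4 b5
    refine add_le_add (mul_le_mul b3 b4 (abs_nonneg _) (mul_nonneg hR (E2_nonneg _)))
      (mul_le_mul b5 b6 (abs_nonneg _) (mul_nonneg hR (E2_nonneg _)))
  have mul4 : ∀ u v w z : ℝ, E2 (u+v+w+z) = E2 u * E2 v * E2 w * E2 z := by
    intros u v w z; rw [E2_add, E2_add, E2_add]
  have step : wt β ε n * |Fn β X n t - Fn β Y n t| ≤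
      E2 ((n:ℝ)*(β - 2 + ε)) * (E2 (((n:ℝ)-1)*β) * ((2*R*E2 (-(((n:ℝ)-1)*(β - 2 + ε)))) * (D * E2 (-(((n:ℝ)-1)*(β - 2 + ε)))))
        + E2 ((n:ℝ)*β) * ((R * E2 (-((n:ℝ)*(β - 2 + ε)))) * (D * E2 (-(((n:ℝ)+1)*(β - 2 + ε))))
          + (R * E2 (-(((n:ℝ)+1)*(β - 2 + ε)))) * (D * E2 (-((n:ℝ)*(β - 2 + ε)))))) := by
    rw [wt_eq hn]
    exact mul_le_mul_of_nonneg_left (key.trans (add_le_add T1 T2)) (E2_nonneg _)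
  refine step.trans ?_
  have t1 : E2 ((n:ℝ)*(β - 2 + ε)) * (E2 (((n:ℝ)-1)*β) * ((2*R*E2 (-(((n:ℝ)-1)*(β - 2 + ε)))) * (D * E2 (-(((n:ℝ)-1)*(β - 2 + ε))))))
      = 2*R*D * E2 ((n:ℝ)*(β - 2 + ε) + ((n:ℝ)-1)*β + -(((n:ℝ)-1)*(β - 2 + ε)) + -(((n:ℝ)-1)*(β - 2 + ε))) := by
    rw [mul4]; ring
  have t2 : E2 ((n:ℝ)*(β - 2 + ε)) * (E2 ((n:ℝ)*β) * ((R * E2 (-((n:ℝ)*(β - 2 + ε)))) * (D * E2 (-(((n:ℝ)+1)*(β - 2 + ε))))))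
      = R*D * E2 ((n:ℝ)*(β - 2 + ε) + (n:ℝ)*β + -((n:ℝ)*(β - 2 + ε)) + -(((n:ℝ)+1)*(β - 2 + ε))) := by
    rw [mul4]; ring
  have t3 : E2 ((n:ℝ)*(β - 2 + ε)) * (E2 ((n:ℝ)*β) * ((R * E2 (-(((n:ℝ)+1)*(β - 2 + ε)))) * (D * E2 (-((n:ℝ)*(β - 2 + ε))))))
      = R*D * E2 ((n:ℝ)*(β - 2 + ε) + (n:ℝ)*β + -(((n:ℝ)+1)*(β - 2 + ε)) + -((n:ℝ)*(β - 2 + ε))) := by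
    rw [mul4]; ring
  have b1 : E2 ((n:ℝ)*(β - 2 + ε) + ((n:ℝ)-1)*β + -(((n:ℝ)-1)*(β - 2 + ε)) + -(((n:ℝ)-1)*(β - 2 + ε)))
      ≤ E2 (β + 2*ε) * E2 ((n:ℝ)*(2-ε)) := by
    rw [← E2_add]; apply E2_mono
    have h : (n:ℝ)*(β - 2 + ε) + ((n:ℝ)-1)*β + -(((n:ℝ)-1)*(β - 2 + ε)) + -(((n:ℝ)-1)*(β - 2 + ε))
        = (β + 2*ε + (n:ℝ)*(2-ε)) - 4 := by ring
    linarith [h.le]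
  have b2 : E2 ((n:ℝ)*(β - 2 + ε) + (n:ℝ)*β + -((n:ℝ)*(β - 2 + ε)) + -(((n:ℝ)+1)*(β - 2 + ε)))
      ≤ 4 * E2 ((n:ℝ)*(2-ε)) := by
    rw [← E2_two, ← E2_add]; apply E2_mono
    have h : (n:ℝ)*(β - 2 + ε) + (n:ℝ)*β + -((n:ℝ)*(β - 2 + ε)) + -(((n:ℝ)+1)*(β - 2 + ε))
        = (2 + (n:ℝ)*(2-ε)) - β - ε := by ring
    linarith [h.le]
  have b3 : E2 ((n:ℝ)*(β - 2 + ε) + (n:ℝ)*β + -(((n:ℝ)+1)*(β - 2 + ε)) + -((n:ℝ)*(β - 2 + ε)))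
      ≤ 4 * E2 ((n:ℝ)*(2-ε)) := by
    rw [← E2_two, ← E2_add]; apply E2_mono
    have h : (n:ℝ)*(β - 2 + ε) + (n:ℝ)*β + -(((n:ℝ)+1)*(β - 2 + ε)) + -((n:ℝ)*(β - 2 + ε))
        = (2 + (n:ℝ)*(2-ε)) - β - ε := by ring
    linarith [h.le]
  have expand : E2 ((n:ℝ)*(β - 2 + ε)) * (E2 (((n:ℝ)-1)*β) * ((2*R*E2 (-(((n:ℝ)-1)*(β - 2 + ε)))) * (D * E2 (-(((n:ℝ)-1)*(β - 2 + ε)))))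
        + E2 ((n:ℝ)*β) * ((R * E2 (-((n:ℝ)*(β - 2 + ε)))) * (D * E2 (-(((n:ℝ)+1)*(β - 2 + ε))))
          + (R * E2 (-(((n:ℝ)+1)*(β - 2 + ε)))) * (D * E2 (-((n:ℝ)*(β - 2 + ε))))))
      = 2*R*D * E2 ((n:ℝ)*(β - 2 + ε) + ((n:ℝ)-1)*β + -(((n:ℝ)-1)*(β - 2 + ε)) + -(((n:ℝ)-1)*(β - 2 + ε)))
        + R*D * E2 ((n:ℝ)*(β - 2 + ε) + (n:ℝ)*β + -((n:ℝ)*(β - 2 + ε)) + -(((n:ℝ)+1)*(β - 2 + ε)))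
        + R*D * E2 ((n:ℝ)*(β - 2 + ε) + (n:ℝ)*β + -(((n:ℝ)+1)*(β - 2 + ε)) + -((n:ℝ)*(β - 2 + ε))) := by
    rw [← t1, ← t2, ← t3]; ring
  rw [expand]
  have hRD : (0:ℝ) ≤ R * D := mul_nonneg hR hD
  have c1 : 2*R*D * E2 ((n:ℝ)*(β - 2 + ε) + ((n:ℝ)-1)*β + -(((n:ℝ)-1)*(β - 2 + ε)) + -(((n:ℝ)-1)*(β - 2 + ε)))
      ≤ 2*R*D * (E2 (β + 2*ε) * E2 ((n:ℝ)*(2-ε))) :=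
    mul_le_mul_of_nonneg_left b1 (by linarith)
  have c2 : R*D * E2 ((n:ℝ)*(β - 2 + ε) + (n:ℝ)*β + -((n:ℝ)*(β - 2 + ε)) + -(((n:ℝ)+1)*(β - 2 + ε)))
      ≤ R*D * (4 * E2 ((n:ℝ)*(2-ε))) := mul_le_mul_of_nonneg_left b2 hRD
  have c3 : R*D * E2 ((n:ℝ)*(β - 2 + ε) + (n:ℝ)*β + -(((n:ℝ)+1)*(β - 2 + ε)) + -((n:ℝ)*(β - 2 + ε)))
      ≤ R*D * (4 * E2 ((n:ℝ)*(2-ε))) := mul_le_mul_of_nonneg_left b3 hRD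
  calc _ ≤ 2*R*D * (E2 (β + 2*ε) * E2 ((n:ℝ)*(2-ε))) + R*D * (4 * E2 ((n:ℝ)*(2-ε)))
        + R*D * (4 * E2 ((n:ℝ)*(2-ε))) := add_le_add (add_le_add c1 c2) c3
    _ = 2 * (E2 (β + 2*ε) + 4) * R * D * E2 ((n:ℝ)*(2-ε)) := by ring

/-! ### The Picard/Duhamel map -/

noncomputable def picardMap (a c : ℝ) (g : ℝ → ℝ) (t : ℝ) : ℝ :=
  Real.exp (-(a*t)) * (c + ∫ s in (0:ℝ)..t, Real.exp (a*s) * g s)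

lemma picardMap_zero (a c : ℝ) (g : ℝ → ℝ) : picardMap a c g 0 = c := by
  simp [picardMap]

lemma expmul_intervalIntegrable {g : ℝ → ℝ} {u v : ℝ} (a : ℝ) (huv : u ≤ v)
    (hg : ContinuousOn g (Set.Icc u v)) :
    IntervalIntegrable (fun s => Real.exp (a*s) * g s) MeasureTheory.volume u v := by
  apply ContinuousOn.intervalIntegrable
  rw [Set.uIcc_of_le huv]
  exact ((Real.continuous_exp.comp (continuous_const.mul continuous_id)).continuousOn).mul hg

lemma picardMap_sub {a c t : ℝ} {g h : ℝ → ℝ}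
    (hg : IntervalIntegrable (fun s => Real.exp (a*s) * g s) MeasureTheory.volume 0 t)
    (hh : IntervalIntegrable (fun s => Real.exp (a*s) * h s) MeasureTheory.volume 0 t) :
    picardMap a c g t - picardMap a c h t = picardMap a 0 (fun s => g s - h s) t := by
  unfold picardMap
  have e : (fun s => Real.exp (a*s) * (g s - h s))
      = fun s => Real.exp (a*s) * g s - Real.exp (a*s) * h s := by funext s; ring
  rw [e, intervalIntegral.integral_sub hg hh]
  ring

lemma exp_hasDerivAt (a : ℝ) (ha : a ≠ 0) (s : ℝ) :
    HasDerivAt (fun u => Real.exp (a*u)/a) (Real.exp (a*s)) s := by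
  have h1 : HasDerivAt (fun u : ℝ => a*u) a s := by
    simpa using (hasDerivAt_id s).const_mul a
  have h2 := (h1.exp).div_const a
  simpa [mul_div_assoc, mul_div_cancel_right₀ _ ha] using h2

lemma integral_exp_mul (a : ℝ) (ha : a ≠ 0) (u v : ℝ) :
    ∫ s in u..v, Real.exp (a*s) = (Real.exp (a*v) - Real.exp (a*u))/a := by
  rw [intervalIntegral.integral_eq_sub_of_hasDerivAt (fun s _ => exp_hasDerivAt a ha s)
    ((Real.continuous_exp.comp (continuous_const.mul continuous_id)).intervalIntegrable u v)]
  ring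

/-- The key a priori bound for the Duhamel map. -/
lemma picardMap_bound {a c t0 t c' : ℝ} {g : ℝ → ℝ}
    (ha : 0 < a) (ht0 : 0 ≤ t0) (ht : t0 ≤ t)
    (hg : ContinuousOn g (Set.Icc 0 t))
    (hzero : ∀ s ∈ Set.Ico 0 t0, g s = 0)
    (hbound : ∀ s ∈ Set.Icc t0 t, |g s| ≤ c') :
    |picardMap a c g t| ≤ |c| + c' * min (t - t0) (1/a) := by
  have hc' : 0 ≤ c' := (abs_nonneg _).trans (hbound t0 ⟨le_refl _, ht⟩)
  have h0t : (0:ℝ) ≤ t := ht0.trans ht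
  have hint1 : IntervalIntegrable (fun s => Real.exp (a*s) * g s) MeasureTheory.volume 0 t :=
    expmul_intervalIntegrable a h0t hg
  have hint2 : IntervalIntegrable (fun s => Real.exp (a*s) * g s) MeasureTheory.volume 0 t0 :=
    hint1.mono_set (by rw [Set.uIcc_of_le ht0, Set.uIcc_of_le h0t]
                       exact Set.Icc_subset_Icc le_rfl ht)
  have hint3 : IntervalIntegrable (fun s => Real.exp (a*s) * g s) MeasureTheory.volume t0 t :=
    hint1.mono_set (by rw [Set.uIcc_of_le ht, Set.uIcc_of_le h0t]
                       exact Set.Icc_subset_Icc ht0 le_rfl)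
  have hz : (∫ s in (0:ℝ)..t0, Real.exp (a*s) * g s) = 0 := by
    have hae : ∀ᵐ x : ℝ ∂MeasureTheory.volume, x ∈ ({t0} : Set ℝ)ᶜ :=
      MeasureTheory.compl_mem_ae_iff.2 (MeasureTheory.measure_singleton _)
    have hc : (∫ s in (0:ℝ)..t0, Real.exp (a*s) * g s) = ∫ s in (0:ℝ)..t0, (0:ℝ) := by
      apply intervalIntegral.integral_congr_ae
      filter_upwards [hae] with s hs hmem
      have hmem' : s ∈ Set.Ioc 0 t0 := by rwa [Set.uIoc_of_le ht0] at hmem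
      have hsm : s ∈ Set.Ico 0 t0 := ⟨hmem'.1.le, lt_of_le_of_ne hmem'.2 (by simpa using hs)⟩
      rw [hzero s hsm, mul_zero]
    rw [hc]; simp
  have hsplit : (∫ s in (0:ℝ)..t, Real.exp (a*s) * g s)
      = ∫ s in t0..t, Real.exp (a*s) * g s := by
    rw [← intervalIntegral.integral_add_adjacent_intervals hint2 hint3, hz, zero_add]
  have hexp1 : Real.exp (-(a*t)) ≤ 1 :=
    Real.exp_le_one_iff.2 (neg_nonpos.2 (mul_nonneg ha.le h0t))
  have hCle : Real.exp (a*t0) ≤ Real.exp (a*t) :=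
    Real.exp_le_exp.2 (mul_le_mul_of_nonneg_left ht ha.le)
  have hJ : |∫ s in t0..t, Real.exp (a*s) * g s|
      ≤ c' * ((Real.exp (a*t) - Real.exp (a*t0))/a) := by
    have hb : ∀ᵐ s ∂(MeasureTheory.volume.restrict (Set.uIoc t0 t)),
        ‖Real.exp (a*s) * g s‖ ≤ Real.exp (a*s) * c' := by
      apply MeasureTheory.ae_restrict_of_forall_mem measurableSet_uIoc
      intro s hs
      have hs' : s ∈ Set.Ioc t0 t := by rwa [Set.uIoc_of_le ht] at hs
      rw [Real.norm_eq_abs, abs_mul, abs_of_pos (Real.exp_pos _)]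
      exact mul_le_mul_of_nonneg_left (hbound s ⟨hs'.1.le, hs'.2⟩) (Real.exp_pos _).le
    have hbi : IntervalIntegrable (fun s => Real.exp (a*s) * c') MeasureTheory.volume t0 t :=
      (((Real.continuous_exp.comp (continuous_const.mul continuous_id)).mul
        continuous_const)).intervalIntegrable t0 t
    have hni := intervalIntegral.norm_integral_le_abs_of_norm_le hb hbi
    rw [Real.norm_eq_abs] at hni
    refine hni.trans ?_
    rw [intervalIntegral.integral_mul_const, integral_exp_mul a ha.ne']
    rw [abs_of_nonneg (mul_nonneg (div_nonneg (by linarith [hCle]) ha.le) hc'), mul_comm]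
  -- key exponential inequality
  have h2 : Real.exp (a*t) * Real.exp (-(a*t)) = 1 := by rw [← Real.exp_add]; simp
  have hC : Real.exp (a*t0) = Real.exp (a*t) * Real.exp (-(a*(t-t0))) := by
    rw [← Real.exp_add, show a*t + -(a*(t-t0)) = a*t0 by ring]
  have h1 : 1 - Real.exp (-(a*(t-t0))) ≤ a*(t-t0) := by
    have := Real.add_one_le_exp (-(a*(t-t0))); linarith
  have hinner : Real.exp (-(a*t)) * c' * (Real.exp (a*t) - Real.exp (a*t0))
      = c' * (1 - Real.exp (-(a*(t-t0)))) := by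
    rw [hC]; linear_combination c' * (1 - Real.exp (-(a*(t-t0)))) * h2
  have hkey : Real.exp (-(a*t)) * (c' * ((Real.exp (a*t) - Real.exp (a*t0))/a))
      ≤ c' * min (t - t0) (1/a) := by
    have hrw : Real.exp (-(a*t)) * (c' * ((Real.exp (a*t) - Real.exp (a*t0))/a))
        = (Real.exp (-(a*t)) * c' * (Real.exp (a*t) - Real.exp (a*t0)))/a := by ring
    rw [hrw, hinner]
    have hmm : c' * min (t - t0) (1/a) = min (c' * (t - t0)) (c' * (1/a)) :=
      mul_min_of_nonneg _ _ hc'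
    rw [hmm]
    apply le_min
    · rw [div_le_iff₀ ha]
      calc c' * (1 - Real.exp (-(a*(t-t0)))) ≤ c' * (a * (t-t0)) :=
            mul_le_mul_of_nonneg_left h1 hc'
        _ = c' * (t-t0) * a := by ring
    · rw [div_le_iff₀ ha]
      have e2 : c' * (1/a) * a = c' := by field_simp
      rw [e2]
      have := (Real.exp_pos (-(a*(t-t0)))).le
      nlinarith
  -- assemble
  calc |picardMap a c g t|
      = Real.exp (-(a*t)) * |c + ∫ s in (0:ℝ)..t, Real.exp (a*s) * g s| := by
        rw [picardMap, abs_mul, abs_of_pos (Real.exp_pos _)]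
    _ ≤ Real.exp (-(a*t)) * (|c| + |∫ s in t0..t, Real.exp (a*s) * g s|) := by
        rw [hsplit]
        exact mul_le_mul_of_nonneg_left (abs_add_le _ _) (Real.exp_pos _).le
    _ = Real.exp (-(a*t)) * |c| + Real.exp (-(a*t)) * |∫ s in t0..t, Real.exp (a*s) * g s| :=
        mul_add _ _ _
    _ ≤ |c| + c' * min (t - t0) (1/a) := by
        refine add_le_add (mul_le_of_le_one_left (abs_nonneg _) hexp1) ?_
        exact (mul_le_mul_of_nonneg_left hJ (Real.exp_pos _).le).trans hkey

lemma picardMap_continuous (a c : ℝ) {g : ℝ → ℝ} (hg : Continuous g) :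
    Continuous (picardMap a c g) := by
  unfold picardMap
  apply Continuous.mul
  · exact Real.continuous_exp.comp (continuous_const.mul continuous_id).neg
  · exact continuous_const.add (intervalIntegral.continuous_primitive
      (fun u v => ((Real.continuous_exp.comp (continuous_const.mul continuous_id)).mul
        hg).intervalIntegrable u v) 0)

lemma picardMap_hasDerivWithinAt {a c T t : ℝ} {g : ℝ → ℝ}
    (hg : ContinuousOn g (Set.Icc 0 T)) (ht : t ∈ Set.Icc 0 T) :
    HasDerivWithinAt (picardMap a c g) (-a * picardMap a c g t + g t) (Set.Icc 0 T) t := by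
  haveI : Fact (t ∈ Set.Icc 0 T) := ⟨ht⟩
  have hgc : ContinuousOn (fun s => Real.exp (a*s) * g s) (Set.Icc 0 T) :=
    ((Real.continuous_exp.comp (continuous_const.mul continuous_id)).continuousOn).mul hg
  have hint : IntervalIntegrable (fun s => Real.exp (a*s) * g s) MeasureTheory.volume 0 t :=
    expmul_intervalIntegrable a ht.1 (hg.mono (Set.Icc_subset_Icc le_rfl ht.2))
  have hmeas : StronglyMeasurableAtFilter (fun s => Real.exp (a*s) * g s)
      (nhdsWithin t (Set.Icc 0 T)) MeasureTheory.volume :=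
    ⟨Set.Icc 0 T, self_mem_nhdsWithin, hgc.aestronglyMeasurable measurableSet_Icc⟩
  have hP : HasDerivWithinAt (fun u => ∫ s in (0:ℝ)..u, Real.exp (a*s) * g s)
      (Real.exp (a*t) * g t) (Set.Icc 0 T) t :=
    intervalIntegral.integral_hasDerivWithinAt_right hint hmeas (hgc _ ht)
  have hexp : HasDerivAt (fun u => Real.exp (-(a*u))) (-a * Real.exp (-(a*t))) t := by
    have h1 : HasDerivAt (fun u : ℝ => -(a*u)) (-a) t := by
      simpa using ((hasDerivAt_id t).const_mul (-a))
    simpa [mul_comm] using h1.exp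
  have hD := (hexp.hasDerivWithinAt).mul ((hasDerivWithinAt_const t _ c).add hP)
  unfold picardMap
  refine hD.congr_deriv ?_
  simp only [Pi.add_apply]
  have h2 : Real.exp (-(a*t)) * Real.exp (a*t) = 1 := by rw [← Real.exp_add]; simp
  linear_combination (g t) * h2

lemma Fn_continuous {β : ℝ} {u : ℕ → ℝ → ℝ} (hu : ∀ m, Continuous (u m)) (n : ℕ) :
    Continuous (fun t => Fn β u n t) :=
  (continuous_const.mul ((hu (n-1)).pow 2)).sub
    ((continuous_const.mul (hu n)).mul (hu (n+1)))

lemma Fn_continuousOn {β : ℝ} (hβ : 0 < β) {u : ℕ → ℝ → ℝ} {s : Set ℝ}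
    (hu : ∀ m, 1 ≤ m → ContinuousOn (u m) s) {n : ℕ} (hn : 1 ≤ n) :
    ContinuousOn (fun t => Fn β u n t) s := by
  rcases eq_or_lt_of_le hn with h1 | h2
  · have he : (fun t => Fn β u n t) = fun t => 0 - lam n ^ β * u n t * u (n+1) t := by
      funext t; unfold Fn
      rw [show n - 1 = 0 by omega, lam_zero, Real.zero_rpow hβ.ne', zero_mul]
    rw [he]
    exact continuousOn_const.sub
      ((continuousOn_const.mul (hu n hn)).mul (hu (n+1) (by omega)))
  · have hm : 1 ≤ n - 1 := by omega
    exact (continuousOn_const.mul ((hu (n-1) hm).pow 2)).sub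
      ((continuousOn_const.mul (hu n hn)).mul (hu (n+1) (by omega)))

lemma choose_T (ν ε η : ℝ) (hν : 0 < ν) (hε : 0 < ε) (hη : 0 < η) :
    ∃ T : ℝ, 0 < T ∧ ∀ n : ℕ, 1 ≤ n →
      E2 ((n:ℝ)*(2-ε)) * min T (1/(ν * lam n ^ 2)) ≤ η := by
  have hr1 : (2:ℝ)^(-ε) < 1 :=
    Real.rpow_lt_one_of_one_lt_of_neg one_lt_two (by linarith)
  have hr0 : (0:ℝ) < (2:ℝ)^(-ε) := Real.rpow_pos_of_pos two_pos _
  obtain ⟨N, hN⟩ := exists_pow_lt_of_lt_one (mul_pos hν hη) hr1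
  refine ⟨η / E2 (2*(N:ℝ)), div_pos hη (E2_pos _), ?_⟩
  intro n hn
  have hlam : (0:ℝ) < lam n ^ 2 := by
    rw [lam_eq hn]; positivity
  have hminnn : (0:ℝ) ≤ min (η / E2 (2*(N:ℝ))) (1/(ν * lam n ^ 2)) :=
    le_min (div_pos hη (E2_pos _)).le (by positivity)
  by_cases hcase : n ≤ N
  · calc E2 ((n:ℝ)*(2-ε)) * min (η / E2 (2*(N:ℝ))) (1/(ν * lam n ^ 2))
        ≤ E2 (2*(N:ℝ)) * (η / E2 (2*(N:ℝ))) := by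
          apply mul_le_mul (E2_mono ?_) (min_le_left _ _) hminnn (E2_nonneg _)
          have h1 : (n:ℝ) ≤ (N:ℝ) := Nat.cast_le.2 hcase
          have h2 : (0:ℝ) ≤ (n:ℝ) := Nat.cast_nonneg n
          nlinarith
      _ = η := mul_div_cancel₀ _ (E2_pos _).ne'
  · have hNn : N ≤ n := by omega
    have hpow : ((2:ℝ)^(-ε))^n ≤ ((2:ℝ)^(-ε))^N :=
      pow_le_pow_of_le_one hr0.le hr1.le hNn
    have hkey : E2 ((n:ℝ)*(2-ε)) * (1/(ν * lam n ^ 2)) = ((2:ℝ)^(-ε))^n / ν := by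
      have hl2 : lam n ^ 2 = E2 ((n:ℝ)*2) := lam_sq hn
      have hpw : ((2:ℝ)^(-ε))^n = E2 ((n:ℝ)*(-ε)) := by
        rw [E2, ← Real.rpow_natCast ((2:ℝ)^(-ε)) n, ← Real.rpow_mul (by norm_num)]
        congr 1; ring
      rw [hl2, hpw]
      have e1 : E2 ((n:ℝ)*(2-ε)) = E2 ((n:ℝ)*(-ε)) * E2 ((n:ℝ)*2) := by
        rw [← E2_add]; congr 1; ring
      rw [e1]
      field_simp [(E2_pos ((n:ℝ)*2)).ne']
    calc E2 ((n:ℝ)*(2-ε)) * min (η / E2 (2*(N:ℝ))) (1/(ν * lam n ^ 2))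
        ≤ E2 ((n:ℝ)*(2-ε)) * (1/(ν * lam n ^ 2)) :=
          mul_le_mul_of_nonneg_left (min_le_right _ _) (E2_nonneg _)
      _ = ((2:ℝ)^(-ε))^n / ν := hkey
      _ ≤ ((2:ℝ)^(-ε))^N / ν := by gcongr
      _ ≤ η := by rw [div_le_iff₀ hν]; linarith [hN]

/-! ### The Picard iterates -/

noncomputable def picIter (β ν : ℝ) (x : ℕ → ℝ) : ℕ → ℕ → ℝ → ℝ
  | 0 => fun _ _ => 0
  | (k+1) => fun n => if n = 0 then fun _ => 0 else
      picardMap (ν * lam n ^ 2) (x n) (fun s => Fn β (picIter β ν x k) n s)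

lemma picIter_succ (β ν : ℝ) (x : ℕ → ℝ) (k : ℕ) {n : ℕ} (hn : 1 ≤ n) :
    picIter β ν x (k+1) n
      = picardMap (ν * lam n ^ 2) (x n) (fun s => Fn β (picIter β ν x k) n s) := by
  have : ¬ (n = 0) := by omega
  simp [picIter, this]

lemma picIter_cont (β ν : ℝ) (x : ℕ → ℝ) : ∀ k n, Continuous (picIter β ν x k n) := by
  intro k
  induction k with
  | zero => intro n; exact continuous_const
  | succ k ih =>
    intro n
    rcases Nat.eq_zero_or_pos n with h0 | h1
    · subst h0; simp only [picIter]; exact continuous_const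
    · rw [picIter_succ β ν x k h1]
      exact picardMap_continuous _ _ (Fn_continuous ih n)

lemma cancel_wt {w A m : ℝ} (hw : w ≠ 0) : w * (|A| + B / w * m) = w * |A| + B * m := by
  field_simp

lemma anu_pos {ν : ℝ} (hν : 0 < ν) {n : ℕ} (hn : 1 ≤ n) : 0 < ν * lam n ^ 2 := by
  have := lam_pos hn; positivity

/-- The master Duhamel estimate for differences. -/
lemma duhamel_est {β ν ε R D T t0 t : ℝ} {u v : ℕ → ℝ → ℝ} {n : ℕ}
    (hβ : 0 < β) (hν : 0 < ν) (hε : 0 < ε) (hn : 1 ≤ n)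
    (hR : 0 ≤ R) (hD : 0 ≤ D)
    (ht0 : 0 ≤ t0) (ht : t0 ≤ t) (htT : t ≤ T)
    (hu : ∀ s ∈ Set.Icc (0:ℝ) t, ∀ m, 1 ≤ m → wt β ε m * |u m s| ≤ R)
    (hv : ∀ s ∈ Set.Icc (0:ℝ) t, ∀ m, 1 ≤ m → wt β ε m * |v m s| ≤ R)
    (hd : ∀ s ∈ Set.Icc t0 t, ∀ m, 1 ≤ m → wt β ε m * |u m s - v m s| ≤ D)
    (heq : ∀ s ∈ Set.Ico (0:ℝ) t0, Fn β u n s = Fn β v n s)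
    (hcont : ContinuousOn (fun s => Fn β u n s - Fn β v n s) (Set.Icc 0 t)) :
    wt β ε n * |picardMap (ν * lam n ^ 2) 0 (fun s => Fn β u n s - Fn β v n s) t|
      ≤ 2*(E2 (β+2*ε)+4)*R*D
        * (E2 ((n:ℝ)*(2-ε)) * min (t - t0) (1/(ν * lam n ^ 2))) := by
  have ha : 0 < ν * lam n ^ 2 := anu_pos hν hn
  have hw : 0 < wt β ε n := wt_pos hn
  set c' : ℝ := 2*(E2 (β+2*ε)+4)*R*D * E2 ((n:ℝ)*(2-ε)) / wt β ε n with hc'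
  have hbound : ∀ s ∈ Set.Icc t0 t, |Fn β u n s - Fn β v n s| ≤ c' := by
    intro s hs
    have hs' : s ∈ Set.Icc (0:ℝ) t := ⟨ht0.trans hs.1, hs.2⟩
    have hlip := Fn_lip β ε hβ hε u v s R D hR hD
      (fun m hm => hu s hs' m hm) (fun m hm => hv s hs' m hm)
      (fun m hm => hd s hs m hm) hn
    rw [hc', le_div_iff₀ hw, mul_comm]
    exact hlip
  have hzero : ∀ s ∈ Set.Ico (0:ℝ) t0, Fn β u n s - Fn β v n s = 0 := by
    intro s hs; rw [heq s hs, sub_self]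
  have hb := picardMap_bound (c := 0) ha ht0 ht hcont hzero hbound
  rw [abs_zero, zero_add] at hb
  calc wt β ε n * |picardMap (ν * lam n ^ 2) 0 (fun s => Fn β u n s - Fn β v n s) t|
      ≤ wt β ε n * (c' * min (t - t0) (1/(ν * lam n ^ 2))) :=
        mul_le_mul_of_nonneg_left hb hw.le
    _ = 2*(E2 (β+2*ε)+4)*R*D * (E2 ((n:ℝ)*(2-ε)) * min (t - t0) (1/(ν * lam n ^ 2))) := by
        rw [hc']; field_simp

/-- Inductive bounds on the Picard iterates. -/
lemma picIter_est (β ν ε : ℝ) (x : ℕ → ℝ) (C0 T η : ℝ)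
    (hβ : 0 < β) (hν : 0 < ν) (hε : 0 < ε)
    (hC0 : ∀ n, 1 ≤ n → wt β ε n * |x n| ≤ C0) (hC0nn : 0 ≤ C0)
    (hT : 0 < T) (hη0 : 0 ≤ η)
    (hsm : ∀ n : ℕ, 1 ≤ n → E2 ((n:ℝ)*(2-ε)) * min T (1/(ν*lam n^2)) ≤ η)
    (hηs : η * (2*(E2 (β+2*ε)+4) * (C0+1)^2) ≤ 1/2) :
    ∀ k, (∀ t ∈ Set.Icc (0:ℝ) T, ∀ n, 1 ≤ n →
        wt β ε n * |picIter β ν x k n t| ≤ C0 + 1)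
      ∧ (∀ t ∈ Set.Icc (0:ℝ) T, ∀ n, 1 ≤ n →
        wt β ε n * |picIter β ν x (k+1) n t - picIter β ν x k n t| ≤ (C0+1)*(1/2)^k) := by
  have hR1 : (1:ℝ) ≤ C0 + 1 := by linarith
  have hK : (0:ℝ) < E2 (β+2*ε)+4 := by have := E2_pos (β+2*ε); linarith
  have hfac : ∀ (t : ℝ), t ∈ Set.Icc (0:ℝ) T → ∀ n : ℕ, 1 ≤ n →
      E2 ((n:ℝ)*(2-ε)) * min (t - 0) (1/(ν * lam n ^ 2)) ≤ η := by
    intro t ht n hn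
    refine le_trans ?_ (hsm n hn)
    apply mul_le_mul_of_nonneg_left _ (E2_nonneg _)
    exact min_le_min (by linarith [ht.2]) le_rfl
  have hfac2K : (0:ℝ) ≤ 2*(E2 (β+2*ε)+4)*(C0+1)*(C0+1) := by nlinarith
  intro k
  induction k with
  | zero =>
    constructor
    · intro t ht n hn
      simp only [picIter, abs_zero, mul_zero]
      linarith
    · intro t ht n hn
      rw [picIter_succ β ν x 0 hn]
      have hg0 : (fun s => Fn β (picIter β ν x 0) n s) = fun _ => (0:ℝ) := by
        funext s; exact Fn_zero β n s
      rw [hg0]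
      have hb := picardMap_bound (c := x n) (g := fun _ => (0:ℝ)) (c' := 0)
        (anu_pos hν hn) le_rfl ht.1 continuousOn_const
        (fun s hs => rfl) (fun s _ => by simp)
      rw [zero_mul, add_zero] at hb
      have h0 : picIter β ν x 0 n t = 0 := rfl
      rw [h0, sub_zero]
      calc wt β ε n * |picardMap (ν * lam n ^ 2) (x n) (fun _ => (0:ℝ)) t|
          ≤ wt β ε n * |x n| := mul_le_mul_of_nonneg_left hb (wt_pos hn).le
        _ ≤ C0 := hC0 n hn
        _ ≤ (C0+1)*(1/2)^0 := by norm_num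
  | succ k ih =>
    obtain ⟨Bk, Dk⟩ := ih
    have Bk1 : ∀ t ∈ Set.Icc (0:ℝ) T, ∀ n, 1 ≤ n →
        wt β ε n * |picIter β ν x (k+1) n t| ≤ C0 + 1 := by
      intro t ht n hn
      rw [picIter_succ β ν x k hn]
      have hgb : ∀ s ∈ Set.Icc (0:ℝ) t, |Fn β (picIter β ν x k) n s|
          ≤ 2*(E2 (β+2*ε)+4)*(C0+1)*(C0+1) * E2 ((n:ℝ)*(2-ε)) / wt β ε n := by
        intro s hs
        have hsT : s ∈ Set.Icc (0:ℝ) T := ⟨hs.1, hs.2.trans ht.2⟩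
        have hlip := Fn_lip β ε hβ hε (picIter β ν x k) (fun _ _ => 0) s (C0+1) (C0+1)
          (by linarith) (by linarith)
          (fun m hm => Bk s hsT m hm)
          (fun m hm => by simp; linarith)
          (fun m hm => by simpa using Bk s hsT m hm)
          hn
        rw [le_div_iff₀ (wt_pos hn), mul_comm]
        simpa [Fn_zero] using hlip
      have hb := picardMap_bound (c := x n) (anu_pos hν hn) le_rfl ht.1
        ((Fn_continuous (picIter_cont β ν x k) n).continuousOn)
        (fun s hs => absurd hs (by simp)) hgb
      have h1 : wt β ε n * |picardMap (ν * lam n ^ 2) (x n)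
            (fun s => Fn β (picIter β ν x k) n s) t|
          ≤ wt β ε n * |x n| + (2*(E2 (β+2*ε)+4)*(C0+1)*(C0+1) * E2 ((n:ℝ)*(2-ε)))
            * min (t - 0) (1/(ν * lam n ^ 2)) := by
        refine (mul_le_mul_of_nonneg_left hb (wt_pos hn).le).trans
          (le_of_eq (cancel_wt (wt_pos hn).ne'))
      have h2 : (2*(E2 (β+2*ε)+4)*(C0+1)*(C0+1) * E2 ((n:ℝ)*(2-ε)))
            * min (t - 0) (1/(ν * lam n ^ 2)) ≤ 1/2 := by
        have h3 := hfac t ht n hn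
        calc (2*(E2 (β+2*ε)+4)*(C0+1)*(C0+1) * E2 ((n:ℝ)*(2-ε)))
              * min (t - 0) (1/(ν * lam n ^ 2))
            = (2*(E2 (β+2*ε)+4)*(C0+1)*(C0+1))
              * (E2 ((n:ℝ)*(2-ε)) * min (t - 0) (1/(ν * lam n ^ 2))) := by ring
          _ ≤ (2*(E2 (β+2*ε)+4)*(C0+1)*(C0+1)) * η := mul_le_mul_of_nonneg_left h3 hfac2K
          _ = η * (2*(E2 (β+2*ε)+4) * (C0+1)^2) := by ring
          _ ≤ 1/2 := hηs
      have := hC0 n hn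
      linarith [h1, h2]
    refine ⟨Bk1, ?_⟩
    intro t ht n hn
    rw [show k+1+1 = k+2 from rfl, picIter_succ β ν x (k+1) hn, picIter_succ β ν x k hn]
    have hint1 : IntervalIntegrable
        (fun s => Real.exp ((ν * lam n ^ 2)*s) * Fn β (picIter β ν x (k+1)) n s)
        MeasureTheory.volume 0 t :=
      expmul_intervalIntegrable _ ht.1 (Fn_continuous (picIter_cont β ν x (k+1)) n).continuousOn
    have hint2 : IntervalIntegrable
        (fun s => Real.exp ((ν * lam n ^ 2)*s) * Fn β (picIter β ν x k) n s)
        MeasureTheory.volume 0 t :=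
      expmul_intervalIntegrable _ ht.1 (Fn_continuous (picIter_cont β ν x k) n).continuousOn
    rw [picardMap_sub hint1 hint2]
    have hdu := duhamel_est (R := C0+1) (D := (C0+1)*(1/2)^k) (T := T) (t0 := 0) (t := t)
      hβ hν hε hn (by linarith) (by positivity) le_rfl ht.1 ht.2
      (fun s hs m hm => Bk1 s ⟨hs.1, hs.2.trans ht.2⟩ m hm)
      (fun s hs m hm => Bk s ⟨hs.1, hs.2.trans ht.2⟩ m hm)
      (fun s hs m hm => Dk s ⟨hs.1, hs.2.trans ht.2⟩ m hm)
      (fun s hs => absurd hs (by simp))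
      (((Fn_continuous (picIter_cont β ν x (k+1)) n).sub
        (Fn_continuous (picIter_cont β ν x k) n)).continuousOn)
    refine hdu.trans ?_
    have h3 := hfac t ht n hn
    have h4 : (0:ℝ) ≤ 2*(E2 (β+2*ε)+4)*(C0+1)*((C0+1)*(1/2)^k) := by
      have h5 : (0:ℝ) ≤ (1/2:ℝ)^k := by positivity
      nlinarith
    calc 2*(E2 (β+2*ε)+4)*(C0+1)*((C0+1)*(1/2)^k)
          * (E2 ((n:ℝ)*(2-ε)) * min (t - 0) (1/(ν * lam n ^ 2)))
        ≤ 2*(E2 (β+2*ε)+4)*(C0+1)*((C0+1)*(1/2)^k) * η := mul_le_mul_of_nonneg_left h3 h4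
      _ = (η * (2*(E2 (β+2*ε)+4) * (C0+1)^2)) * (1/2)^k := by ring
      _ ≤ (1/2) * (1/2)^k := mul_le_mul_of_nonneg_right hηs (by positivity)
      _ = 1 * (1/2)^(k+1) := by ring
      _ ≤ (C0+1)*(1/2)^(k+1) := mul_le_mul_of_nonneg_right hR1 (by positivity)

/-! ### The limit of the Picard iterates -/

noncomputable def Xlim (β ν : ℝ) (x : ℕ → ℝ) (n : ℕ) (t : ℝ) : ℝ :=
  limUnder Filter.atTop (fun k => picIter β ν x k n t)

lemma picIter_zero_comp (β ν : ℝ) (x : ℕ → ℝ) (k : ℕ) (t : ℝ) :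
    picIter β ν x k 0 t = 0 := by
  cases k with
  | zero => rfl
  | succ k => simp [picIter]

lemma Xlim_zero_comp (β ν : ℝ) (x : ℕ → ℝ) (t : ℝ) : Xlim β ν x 0 t = 0 := by
  have h : (fun k => picIter β ν x k 0 t) = fun _ => (0:ℝ) := by
    funext k; exact picIter_zero_comp β ν x k t
  rw [Xlim, h]
  exact Filter.Tendsto.limUnder_eq tendsto_const_nhds

section Limit

variable {β ν ε : ℝ} {x : ℕ → ℝ} {C0 T : ℝ}

/-- abbreviation for the difference hypothesis -/
def DiffHyp (β ν ε : ℝ) (x : ℕ → ℝ) (C0 T : ℝ) : Prop :=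
  ∀ k, ∀ t ∈ Set.Icc (0:ℝ) T, ∀ n, 1 ≤ n →
    wt β ε n * |picIter β ν x (k+1) n t - picIter β ν x k n t| ≤ (C0+1)*(1/2)^k

lemma tele_bound {f : ℕ → ℝ} {c : ℝ} (hc : 0 ≤ c)
    (h : ∀ j, |f (j+1) - f j| ≤ c * (1/2)^j) (k m : ℕ) :
    |f (k+m) - f k| ≤ 2*c*(1/2)^k := by
  have key : ∀ m, |f (k+m) - f k| ≤ 2*c*(1/2)^k * (1 - (1/2)^m) := by
    intro m
    induction m with
    | zero => simp
    | succ m ih =>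
      have h1 := h (k+m)
      calc |f (k+(m+1)) - f k|
          ≤ |f (k+m+1) - f (k+m)| + |f (k+m) - f k| := by
            rw [show k+(m+1) = k+m+1 by ring]
            exact abs_sub_le _ _ _
        _ ≤ c*(1/2)^(k+m) + 2*c*(1/2)^k * (1 - (1/2)^m) := add_le_add h1 ih
        _ = 2*c*(1/2)^k * (1 - (1/2)^(m+1)) := by
            rw [pow_add, pow_succ]; ring
  refine (key m).trans ?_
  have h2 : (0:ℝ) ≤ (1/2:ℝ)^m := by positivity
  have h3 : (0:ℝ) ≤ 2*c*(1/2:ℝ)^k := by positivity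
  nlinarith

lemma pic_dist_le (hD : DiffHyp β ν ε x C0 T) (hC0nn : 0 ≤ C0)
    {n : ℕ} (hn : 1 ≤ n) {t : ℝ} (ht : t ∈ Set.Icc (0:ℝ) T) (k : ℕ) :
    |picIter β ν x (k+1) n t - picIter β ν x k n t| ≤ ((C0+1)/wt β ε n) * (1/2)^k := by
  have hw := wt_pos (β := β) (ε := ε) hn
  rw [div_mul_eq_mul_div, le_div_iff₀ hw, mul_comm]
  exact hD k t ht n hn

lemma pic_tendsto (hD : DiffHyp β ν ε x C0 T) (hC0nn : 0 ≤ C0)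
    {n : ℕ} (hn : 1 ≤ n) {t : ℝ} (ht : t ∈ Set.Icc (0:ℝ) T) :
    Filter.Tendsto (fun k => picIter β ν x k n t) Filter.atTop (nhds (Xlim β ν x n t)) := by
  have hcs : CauchySeq (fun k => picIter β ν x k n t) := by
    apply cauchySeq_of_le_geometric (1/2) ((C0+1)/wt β ε n) (by norm_num)
    intro k
    rw [Real.dist_eq, abs_sub_comm]
    exact pic_dist_le hD hC0nn hn ht k
  exact hcs.tendsto_limUnder

lemma Xlim_rate (hD : DiffHyp β ν ε x C0 T) (hC0nn : 0 ≤ C0)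
    {n : ℕ} (hn : 1 ≤ n) {t : ℝ} (ht : t ∈ Set.Icc (0:ℝ) T) (k : ℕ) :
    wt β ε n * |Xlim β ν x n t - picIter β ν x k n t| ≤ 2*(C0+1)*(1/2)^k := by
  have hw := wt_pos (β := β) (ε := ε) hn
  have htele : ∀ m, |picIter β ν x (k+m) n t - picIter β ν x k n t|
      ≤ 2*((C0+1)/wt β ε n)*(1/2)^k :=
    tele_bound (c := (C0+1)/wt β ε n) (f := fun m => picIter β ν x m n t)
      (by positivity) (fun j => pic_dist_le hD hC0nn hn ht j) k
  have hlim := pic_tendsto hD hC0nn hn ht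
  have hsh : Filter.Tendsto (fun m => picIter β ν x (k+m) n t) Filter.atTop
      (nhds (Xlim β ν x n t)) := by
    have := hlim.comp (Filter.tendsto_add_atTop_nat k)
    simpa [Function.comp_def, Nat.add_comm] using this
  have habs : Filter.Tendsto (fun m => |picIter β ν x (k+m) n t - picIter β ν x k n t|)
      Filter.atTop (nhds (|Xlim β ν x n t - picIter β ν x k n t|)) :=
    ((hsh.sub tendsto_const_nhds).abs)
  have hle : |Xlim β ν x n t - picIter β ν x k n t| ≤ 2*((C0+1)/wt β ε n)*(1/2)^k :=
    le_of_tendsto habs (Filter.Eventually.of_forall htele)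
  calc wt β ε n * |Xlim β ν x n t - picIter β ν x k n t|
      ≤ wt β ε n * (2*((C0+1)/wt β ε n)*(1/2)^k) := mul_le_mul_of_nonneg_left hle hw.le
    _ = 2*(C0+1)*(1/2)^k := by field_simp

lemma Xlim_bound (hD : DiffHyp β ν ε x C0 T) (hC0nn : 0 ≤ C0)
    (hB : ∀ k, ∀ t ∈ Set.Icc (0:ℝ) T, ∀ n, 1 ≤ n →
      wt β ε n * |picIter β ν x k n t| ≤ C0 + 1)
    {n : ℕ} (hn : 1 ≤ n) {t : ℝ} (ht : t ∈ Set.Icc (0:ℝ) T) :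
    wt β ε n * |Xlim β ν x n t| ≤ C0 + 1 := by
  have hlim := pic_tendsto hD hC0nn hn ht
  have habs : Filter.Tendsto (fun k => wt β ε n * |picIter β ν x k n t|)
      Filter.atTop (nhds (wt β ε n * |Xlim β ν x n t|)) := hlim.abs.const_mul _
  exact le_of_tendsto habs (Filter.Eventually.of_forall (fun k => hB k t ht n hn))

lemma Xlim_contOn (hD : DiffHyp β ν ε x C0 T) (hC0nn : 0 ≤ C0)
    {n : ℕ} (hn : 1 ≤ n) : ContinuousOn (Xlim β ν x n) (Set.Icc 0 T) := by
  have hw := wt_pos (β := β) (ε := ε) hn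
  apply TendstoUniformlyOn.continuousOn (F := fun k t => picIter β ν x k n t)
    (p := Filter.atTop)
  · rw [Metric.tendstoUniformlyOn_iff]
    intro ε' hε'
    have h0 : Filter.Tendsto (fun k => (2*(C0+1)/wt β ε n)*(1/2:ℝ)^k)
        Filter.atTop (nhds 0) := by
      have := tendsto_pow_atTop_nhds_zero_of_lt_one (by norm_num : (0:ℝ) ≤ 1/2)
        (by norm_num : (1/2:ℝ) < 1)
      simpa using this.const_mul (2*(C0+1)/wt β ε n)
    filter_upwards [h0.eventually_lt_const hε'] with k hk t ht
    have hr := Xlim_rate hD hC0nn hn ht k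
    rw [Real.dist_eq]
    have : |Xlim β ν x n t - picIter β ν x k n t| ≤ (2*(C0+1)/wt β ε n)*(1/2)^k := by
      rw [div_mul_eq_mul_div, le_div_iff₀ hw]
      calc |Xlim β ν x n t - picIter β ν x k n t| * wt β ε n
          = wt β ε n * |Xlim β ν x n t - picIter β ν x k n t| := by ring
        _ ≤ 2*(C0+1)*(1/2)^k := hr
    linarith
  · exact (Filter.Eventually.of_forall (fun k => (picIter_cont β ν x k n).continuousOn)).frequently

end Limit

lemma picardMap_def (a c : ℝ) (g : ℝ → ℝ) (t : ℝ) :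
    picardMap a c g t = Real.exp (-(a*t)) * (c + ∫ s in (0:ℝ)..t, Real.exp (a*s) * g s) := rfl

lemma Fn_bound {β ε : ℝ} (hβ : 0 < β) (hε : 0 < ε) {u : ℕ → ℝ → ℝ} {R s : ℝ} (hR : 0 ≤ R)
    (hu : ∀ m, 1 ≤ m → wt β ε m * |u m s| ≤ R) {n : ℕ} (hn : 1 ≤ n) :
    |Fn β u n s| ≤ 2*(E2 (β+2*ε)+4)*R*R * E2 ((n:ℝ)*(2-ε)) / wt β ε n := by
  have hlip := Fn_lip β ε hβ hε u (fun _ _ => 0) s R R hR hR hu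
    (fun m hm => by simpa using hR)
    (fun m hm => by simpa using hu m hm) hn
  rw [le_div_iff₀ (wt_pos hn), mul_comm]
  simpa [Fn_zero] using hlip

lemma Fn_congr {β : ℝ} (hβ : 0 < β) {u v : ℕ → ℝ → ℝ} {s : ℝ}
    (h : ∀ m, 1 ≤ m → u m s = v m s) {n : ℕ} (hn : 1 ≤ n) :
    Fn β u n s = Fn β v n s := by
  rcases eq_or_lt_of_le hn with h1 | h2
  · unfold Fn
    rw [show n - 1 = 0 by omega, lam_zero, Real.zero_rpow hβ.ne']
    rw [h n hn, h (n+1) (by omega)]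
    ring
  · unfold Fn
    rw [h (n-1) (by omega), h n hn, h (n+1) (by omega)]

section IE

variable {β ν ε : ℝ} {x : ℕ → ℝ} {C0 T : ℝ}

/-- the integral equation for the limit -/
lemma Xlim_IE (hβ : 0 < β) (hν : 0 < ν) (hε : 0 < ε) (hC0nn : 0 ≤ C0)
    (hB : ∀ k, ∀ t ∈ Set.Icc (0:ℝ) T, ∀ n, 1 ≤ n →
      wt β ε n * |picIter β ν x k n t| ≤ C0+1)
    (hD : DiffHyp β ν ε x C0 T)
    {n : ℕ} (hn : 1 ≤ n) {t : ℝ} (ht : t ∈ Set.Icc (0:ℝ) T) :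
    Xlim β ν x n t
      = picardMap (ν * lam n ^ 2) (x n) (fun s => Fn β (Xlim β ν x) n s) t := by
  have ha : 0 < ν * lam n ^ 2 := anu_pos hν hn
  have h0t : (0:ℝ) ≤ t := ht.1
  have htT : t ≤ T := ht.2
  have hcomp : ∀ m, ∀ s ∈ Set.Icc (0:ℝ) T,
      Filter.Tendsto (fun k => picIter β ν x k m s) Filter.atTop
        (nhds (Xlim β ν x m s)) := by
    intro m s hs
    rcases Nat.eq_zero_or_pos m with h0 | h1
    · subst h0
      rw [Xlim_zero_comp β ν x s]
      have he : (fun k => picIter β ν x k 0 s) = fun _ => (0:ℝ) := by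
        funext k; exact picIter_zero_comp β ν x k s
      rw [he]; exact tendsto_const_nhds
    · exact pic_tendsto hD hC0nn h1 hs
  have hFlim : ∀ s ∈ Set.Icc (0:ℝ) T,
      Filter.Tendsto (fun k => Fn β (picIter β ν x k) n s) Filter.atTop
        (nhds (Fn β (Xlim β ν x) n s)) := by
    intro s hs
    unfold Fn
    exact (tendsto_const_nhds.mul ((hcomp (n-1) s hs).pow 2)).sub
      ((tendsto_const_nhds.mul (hcomp n s hs)).mul (hcomp (n+1) s hs))
  set Bd : ℝ := 2*(E2 (β+2*ε)+4)*(C0+1)*(C0+1) * E2 ((n:ℝ)*(2-ε)) / wt β ε n with hBd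
  have hFb : ∀ k, ∀ s ∈ Set.Icc (0:ℝ) T, |Fn β (picIter β ν x k) n s| ≤ Bd :=
    fun k s hs => Fn_bound hβ hε (by linarith) (fun m hm => hB k s hs m hm) hn
  have hIconv : Filter.Tendsto
      (fun k => ∫ s in (0:ℝ)..t, Real.exp ((ν * lam n ^ 2)*s) * Fn β (picIter β ν x k) n s)
      Filter.atTop
      (nhds (∫ s in (0:ℝ)..t, Real.exp ((ν * lam n ^ 2)*s) * Fn β (Xlim β ν x) n s)) := by
    apply intervalIntegral.tendsto_integral_filter_of_dominated_convergence
      (bound := fun _ => Real.exp ((ν * lam n ^ 2)*T) * Bd)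
    · exact Filter.Eventually.of_forall (fun k =>
        ((Real.continuous_exp.comp (continuous_const.mul continuous_id)).mul
          (Fn_continuous (picIter_cont β ν x k) n)).aestronglyMeasurable)
    · apply Filter.Eventually.of_forall
      intro k
      apply MeasureTheory.ae_of_all
      intro s hs
      have hs' : s ∈ Set.Icc (0:ℝ) T := by
        rw [Set.uIoc_of_le h0t] at hs
        exact ⟨hs.1.le, hs.2.trans htT⟩
      rw [Real.norm_eq_abs, abs_mul, abs_of_pos (Real.exp_pos _)]
      have he : Real.exp ((ν * lam n ^ 2)*s) ≤ Real.exp ((ν * lam n ^ 2)*T) :=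
        Real.exp_le_exp.2 (mul_le_mul_of_nonneg_left hs'.2 ha.le)
      have hbnn : 0 ≤ Bd := (abs_nonneg _).trans (hFb k s hs')
      exact mul_le_mul he (hFb k s hs') (abs_nonneg _) (Real.exp_pos _).le
    · exact intervalIntegrable_const
    · apply MeasureTheory.ae_of_all
      intro s hs
      have hs' : s ∈ Set.Icc (0:ℝ) T := by
        rw [Set.uIoc_of_le h0t] at hs
        exact ⟨hs.1.le, hs.2.trans htT⟩
      exact (hFlim s hs').const_mul _
  have h1 : Filter.Tendsto (fun k => picIter β ν x (k+1) n t) Filter.atTop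
      (nhds (Xlim β ν x n t)) := by
    have := (pic_tendsto hD hC0nn hn ht).comp (Filter.tendsto_add_atTop_nat 1)
    simpa [Function.comp_def] using this
  have h2 : Filter.Tendsto (fun k => picIter β ν x (k+1) n t) Filter.atTop
      (nhds (picardMap (ν * lam n ^ 2) (x n) (fun s => Fn β (Xlim β ν x) n s) t)) := by
    have he : ∀ k, picIter β ν x (k+1) n t = Real.exp (-((ν * lam n ^ 2)*t))
        * (x n + ∫ s in (0:ℝ)..t, Real.exp ((ν * lam n ^ 2)*s) * Fn β (picIter β ν x k) n s) :=
      fun k => by rw [picIter_succ β ν x k hn]; rfl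
    simp only [he]
    rw [picardMap_def]
    exact tendsto_const_nhds.mul (tendsto_const_nhds.add hIconv)
  exact tendsto_nhds_unique h1 h2

/-- the limit satisfies the ODE, in the form we need -/
lemma Xlim_ode (hβ : 0 < β) (hν : 0 < ν) (hε : 0 < ε) (hC0nn : 0 ≤ C0)
    (hB : ∀ k, ∀ t ∈ Set.Icc (0:ℝ) T, ∀ n, 1 ≤ n →
      wt β ε n * |picIter β ν x k n t| ≤ C0+1)
    (hD : DiffHyp β ν ε x C0 T)
    {n : ℕ} (hn : 1 ≤ n) {t : ℝ} (ht : t ∈ Set.Icc (0:ℝ) T) :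
    HasDerivWithinAt (Xlim β ν x n)
      (-(ν * lam n ^ 2) * Xlim β ν x n t + Fn β (Xlim β ν x) n t) (Set.Icc 0 T) t := by
  have hcont : ContinuousOn (fun s => Fn β (Xlim β ν x) n s) (Set.Icc 0 T) :=
    Fn_continuousOn hβ (fun m hm => Xlim_contOn hD hC0nn hm) hn
  have hpm := picardMap_hasDerivWithinAt (a := ν * lam n ^ 2) (c := x n) hcont ht
  rw [← Xlim_IE hβ hν hε hC0nn hB hD hn ht] at hpm
  exact hpm.congr (fun s hs => Xlim_IE hβ hν hε hC0nn hB hD hn hs)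
    (Xlim_IE hβ hν hε hC0nn hB hD hn ht)

lemma Xlim_init (hβ : 0 < β) (hν : 0 < ν) (hε : 0 < ε) (hC0nn : 0 ≤ C0) (hT : 0 ≤ T)
    (hB : ∀ k, ∀ t ∈ Set.Icc (0:ℝ) T, ∀ n, 1 ≤ n →
      wt β ε n * |picIter β ν x k n t| ≤ C0+1)
    (hD : DiffHyp β ν ε x C0 T)
    {n : ℕ} (hn : 1 ≤ n) : Xlim β ν x n 0 = x n := by
  rw [Xlim_IE hβ hν hε hC0nn hB hD hn ⟨le_rfl, hT⟩, picardMap_zero]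

end IE

/-- any continuous bounded solution of the ODE satisfies the integral equation -/
lemma sol_IE {β ν T : ℝ} {Y : ℕ → ℝ → ℝ} (hβ : 0 < β) (hν : 0 < ν)
    (hsol : ∀ n, 1 ≤ n → ∀ t ∈ Set.Icc (0:ℝ) T, HasDerivWithinAt (Y n)
      (-(ν * lam n ^ 2) * Y n t + Fn β Y n t) (Set.Icc 0 T) t)
    (hcY : ∀ m, 1 ≤ m → ContinuousOn (Y m) (Set.Icc 0 T))
    {n : ℕ} (hn : 1 ≤ n) {t : ℝ} (ht : t ∈ Set.Icc (0:ℝ) T) :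
    Y n t = picardMap (ν * lam n ^ 2) (Y n 0) (fun s => Fn β Y n s) t := by
  set a := ν * lam n ^ 2 with ha
  have hFc : ContinuousOn (fun s => Fn β Y n s) (Set.Icc 0 T) :=
    Fn_continuousOn hβ hcY hn
  have hφd : ∀ s ∈ Set.Ioo (0:ℝ) t, HasDerivWithinAt (fun u => Real.exp (a*u) * Y n u)
      (Real.exp (a*s) * Fn β Y n s) (Set.Ioi s) s := by
    intro s hs
    have hsIcc : s ∈ Set.Icc (0:ℝ) T := ⟨hs.1.le, hs.2.le.trans ht.2⟩
    have hsT : s < T := lt_of_lt_of_le hs.2 ht.2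
    have hmem : Set.Icc (0:ℝ) T ∈ nhdsWithin s (Set.Ioi s) := by
      have h1 : Set.Ioc s T ∈ nhdsWithin s (Set.Ioi s) := Ioc_mem_nhdsGT hsT
      exact Filter.mem_of_superset h1 (fun u hu => ⟨hs.1.le.trans hu.1.le, hu.2⟩)
    have hY' : HasDerivWithinAt (Y n) (-a * Y n s + Fn β Y n s) (Set.Ioi s) s :=
      (hsol n hn s hsIcc).mono_of_mem_nhdsWithin hmem
    have hexp : HasDerivAt (fun u => Real.exp (a*u)) (a * Real.exp (a*s)) s := by
      have h1 : HasDerivAt (fun u : ℝ => a*u) a s := by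
        simpa using (hasDerivAt_id s).const_mul a
      simpa [mul_comm] using h1.exp
    have hprod := (hexp.hasDerivWithinAt).mul hY'
    exact hprod.congr_deriv (by ring)
  have hcont : ContinuousOn (fun u => Real.exp (a*u) * Y n u) (Set.Icc 0 t) :=
    (((Real.continuous_exp.comp (continuous_const.mul continuous_id)).continuousOn).mul
      ((hcY n hn).mono (Set.Icc_subset_Icc le_rfl ht.2)))
  have hint : IntervalIntegrable (fun s => Real.exp (a*s) * Fn β Y n s)
      MeasureTheory.volume 0 t :=
    expmul_intervalIntegrable a ht.1 (hFc.mono (Set.Icc_subset_Icc le_rfl ht.2))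
  have hFTC := intervalIntegral.integral_eq_sub_of_hasDeriv_right_of_le ht.1 hcont hφd hint
  rw [picardMap_def, hFTC]
  have h2 : Real.exp (-(a*t)) * Real.exp (a*t) = 1 := by rw [← Real.exp_add]; simp
  have h3 : Real.exp (a*0) = 1 := by rw [mul_zero, Real.exp_zero]
  rw [h3]
  linear_combination (-(Y n t)) * h2

/-- Uniqueness of bounded solutions of the integral equation. -/
lemma uniqueness_IE {β ν ε T B : ℝ} {c : ℕ → ℝ} {U V : ℕ → ℝ → ℝ}
    (hβ : 0 < β) (hν : 0 < ν) (hε : 0 < ε) (hT : 0 ≤ T) (hBnn : 0 ≤ B)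
    (hUc : ∀ m, 1 ≤ m → ContinuousOn (U m) (Set.Icc 0 T))
    (hVc : ∀ m, 1 ≤ m → ContinuousOn (V m) (Set.Icc 0 T))
    (hUb : ∀ t ∈ Set.Icc (0:ℝ) T, ∀ m, 1 ≤ m → wt β ε m * |U m t| ≤ B)
    (hVb : ∀ t ∈ Set.Icc (0:ℝ) T, ∀ m, 1 ≤ m → wt β ε m * |V m t| ≤ B)
    (hUIE : ∀ n, 1 ≤ n → ∀ t ∈ Set.Icc (0:ℝ) T,
      U n t = picardMap (ν * lam n ^ 2) (c n) (fun s => Fn β U n s) t)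
    (hVIE : ∀ n, 1 ≤ n → ∀ t ∈ Set.Icc (0:ℝ) T,
      V n t = picardMap (ν * lam n ^ 2) (c n) (fun s => Fn β V n s) t) :
    ∀ t ∈ Set.Icc (0:ℝ) T, ∀ n, 1 ≤ n → U n t = V n t := by
  have hKpos : (0:ℝ) < E2 (β+2*ε)+4 := by have := E2_pos (β+2*ε); linarith
  have hη'pos : (0:ℝ) < 1/(4*(E2 (β+2*ε)+4)*(B+1)) := by
    apply div_pos one_pos
    nlinarith
  obtain ⟨δ, hδpos, hδ⟩ := choose_T ν ε _ hν hε hη'pos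
  have hfrac : 2*(E2 (β+2*ε)+4)*B*(1/(4*(E2 (β+2*ε)+4)*(B+1))) ≤ 1/2 := by
    rw [mul_one_div, div_le_iff₀ (by nlinarith : (0:ℝ) < 4*(E2 (β+2*ε)+4)*(B+1))]
    nlinarith
  -- one contraction segment
  have seg : ∀ (t0 : ℝ), 0 ≤ t0 → t0 ≤ T →
      (∀ s ∈ Set.Icc (0:ℝ) T, s ≤ t0 → ∀ m, 1 ≤ m → U m s = V m s) →
      ∀ t ∈ Set.Icc (0:ℝ) T, t ≤ t0 + δ → ∀ n, 1 ≤ n → U n t = V n t := by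
    intro t0 ht00 ht0T hpast t ht htδ n hn
    have hiter : ∀ m : ℕ, ∀ s ∈ Set.Icc (0:ℝ) T, s ≤ t → ∀ p, 1 ≤ p →
        wt β ε p * |U p s - V p s| ≤ (2*B) * (1/2)^m := by
      intro m
      induction m with
      | zero =>
        intro s hs hst p hp
        have h1 := hUb s hs p hp
        have h2 := hVb s hs p hp
        have h3 : |U p s - V p s| ≤ |U p s| + |V p s| := abs_sub _ _
        have hw : (0:ℝ) ≤ wt β ε p := (wt_pos hp).le
        have h4 : wt β ε p * |U p s - V p s| ≤ wt β ε p * (|U p s| + |V p s|) :=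
          mul_le_mul_of_nonneg_left h3 hw
        rw [mul_add] at h4
        simp only [pow_zero, mul_one]
        linarith
      | succ m ih =>
        intro s hs hst p hp
        have hpw : (0:ℝ) ≤ (2*B)*(1/2:ℝ)^m :=
          mul_nonneg (by linarith) (by positivity)
        by_cases hs0 : s ≤ t0
        · rw [hpast s hs hs0 p hp, sub_self, abs_zero, mul_zero]
          exact mul_nonneg (by linarith) (by positivity)
        · push_neg at hs0
          have hIntU : IntervalIntegrable
              (fun σ => Real.exp ((ν * lam p ^ 2)*σ) * Fn β U p σ)
              MeasureTheory.volume 0 s :=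
            expmul_intervalIntegrable _ hs.1
              ((Fn_continuousOn hβ hUc hp).mono (Set.Icc_subset_Icc le_rfl hs.2))
          have hIntV : IntervalIntegrable
              (fun σ => Real.exp ((ν * lam p ^ 2)*σ) * Fn β V p σ)
              MeasureTheory.volume 0 s :=
            expmul_intervalIntegrable _ hs.1
              ((Fn_continuousOn hβ hVc hp).mono (Set.Icc_subset_Icc le_rfl hs.2))
          have hsub : U p s - V p s
              = picardMap (ν * lam p ^ 2) 0 (fun σ => Fn β U p σ - Fn β V p σ) s := by
            rw [hUIE p hp s hs, hVIE p hp s hs, picardMap_sub hIntU hIntV]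
          rw [hsub]
          have hdu := duhamel_est (R := B) (D := (2*B)*(1/2)^m) (T := T) (t0 := t0) (t := s)
            hβ hν hε hp hBnn hpw ht00 hs0.le hs.2
            (fun σ hσ q hq => hUb σ ⟨hσ.1, hσ.2.trans hs.2⟩ q hq)
            (fun σ hσ q hq => hVb σ ⟨hσ.1, hσ.2.trans hs.2⟩ q hq)
            (fun σ hσ q hq => ih σ ⟨ht00.trans hσ.1, hσ.2.trans hs.2⟩ (hσ.2.trans hst) q hq)
            (fun σ hσ => Fn_congr hβ
              (fun q hq => hpast σ ⟨hσ.1, hσ.2.le.trans ht0T⟩ hσ.2.le q hq) hp)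
            (((Fn_continuousOn hβ hUc hp).sub (Fn_continuousOn hβ hVc hp)).mono
              (Set.Icc_subset_Icc le_rfl hs.2))
          refine hdu.trans ?_
          have hmin : E2 ((p:ℝ)*(2-ε)) * min (s - t0) (1/(ν * lam p ^ 2))
              ≤ 1/(4*(E2 (β+2*ε)+4)*(B+1)) := by
            refine le_trans ?_ (hδ p hp)
            apply mul_le_mul_of_nonneg_left _ (E2_nonneg _)
            exact min_le_min (by linarith) le_rfl
          have hcoef : (0:ℝ) ≤ 2*(E2 (β+2*ε)+4)*B*((2*B)*(1/2:ℝ)^m) :=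
            mul_nonneg (mul_nonneg (by linarith : (0:ℝ) ≤ 2*(E2 (β+2*ε)+4)) hBnn) hpw
          calc 2*(E2 (β+2*ε)+4)*B*((2*B)*(1/2)^m)
                * (E2 ((p:ℝ)*(2-ε)) * min (s - t0) (1/(ν * lam p ^ 2)))
              ≤ 2*(E2 (β+2*ε)+4)*B*((2*B)*(1/2)^m) * (1/(4*(E2 (β+2*ε)+4)*(B+1))) :=
                mul_le_mul_of_nonneg_left hmin hcoef
            _ = ((2*B)*(1/2)^m) * (2*(E2 (β+2*ε)+4)*B*(1/(4*(E2 (β+2*ε)+4)*(B+1)))) := by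
                ring
            _ ≤ ((2*B)*(1/2)^m) * (1/2) := mul_le_mul_of_nonneg_left hfrac hpw
            _ = (2*B)*(1/2)^(m+1) := by ring
    have hgeo : Filter.Tendsto (fun m => (2*B)*(1/2:ℝ)^m) Filter.atTop (nhds 0) := by
      simpa using (tendsto_pow_atTop_nhds_zero_of_lt_one
        (by norm_num : (0:ℝ) ≤ 1/2) (by norm_num : (1/2:ℝ) < 1)).const_mul (2*B)
    have hle : wt β ε n * |U n t - V n t| ≤ 0 :=
      le_of_tendsto_of_tendsto' tendsto_const_nhds hgeo
        (fun m => hiter m t ht le_rfl n hn)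
    have hw := wt_pos (β := β) (ε := ε) hn
    have habs : |U n t - V n t| ≤ 0 := by nlinarith [abs_nonneg (U n t - V n t)]
    have h0 := le_antisymm habs (abs_nonneg _)
    rw [abs_eq_zero, sub_eq_zero] at h0
    exact h0
  -- stepping
  have main : ∀ j : ℕ, ∀ t ∈ Set.Icc (0:ℝ) T, t ≤ (j:ℝ)*δ → ∀ n, 1 ≤ n → U n t = V n t := by
    intro j
    induction j with
    | zero =>
      intro t ht h0 n hn
      have ht0 : t = 0 := le_antisymm (by simpa using h0) ht.1
      subst ht0
      rw [hUIE n hn 0 ⟨le_rfl, hT⟩, hVIE n hn 0 ⟨le_rfl, hT⟩, picardMap_zero, picardMap_zero]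
    | succ j ih =>
      intro t ht htj n hn
      by_cases hc : (j:ℝ)*δ ≤ T
      · refine seg ((j:ℝ)*δ) (by positivity) hc
          (fun s hs hsj m hm => ih s hs hsj m hm) t ht ?_ n hn
        push_cast at htj
        linarith
      · push_neg at hc
        exact seg T hT le_rfl
          (fun s hs hsT m hm => ih s hs (hsT.trans hc.le) m hm) t ht
          (by linarith [ht.2, hδpos]) n hn
  intro t ht n hn
  obtain ⟨j, hj⟩ := exists_nat_ge (T/δ)
  have hTj : T ≤ (j:ℝ)*δ := by
    rw [div_le_iff₀ hδpos] at hj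
    linarith
  exact main j t ht (ht.2.trans hTj) n hn

/-- `X` is a weak solution of the viscous dyadic model with parameter `β` and
viscosity `ν` on the interval `I`. -/
def IsViscousSolution (β ν : ℝ) (I : Set ℝ) (X : ℕ → ℝ → ℝ) : Prop :=
  ∀ n, 1 ≤ n → ∀ t ∈ I, HasDerivWithinAt (X n)
    (-ν * lam n ^ 2 * X n t + lam (n - 1) ^ β * (X (n - 1) t) ^ 2
      - lam n ^ β * X n t * X (n + 1) t) I t

/-- local existence and uniqueness in the space
`𝒲_ε = {x : sup_{n≥1} λ_n^{β-2+ε} |x_n| < ∞}`. -/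
theorem local_wellposedness_in_W
    (β ν ε : ℝ) (hβ : 0 < β) (hν : 0 < ν) (hε : 0 < ε)
    (x : ℕ → ℝ) (hx : ∃ C : ℝ, ∀ n, 1 ≤ n → lam n ^ (β - 2 + ε) * |x n| ≤ C) :
    ∃ T : ℝ, 0 < T ∧ ∃ X : ℕ → ℝ → ℝ,
      (IsViscousSolution β ν (Set.Icc 0 T) X ∧ (∀ n, 1 ≤ n → X n 0 = x n) ∧
        ∃ C : ℝ, ∀ t ∈ Set.Icc (0 : ℝ) T, ∀ n, 1 ≤ n →
          lam n ^ (β - 2 + ε) * |X n t| ≤ C) ∧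
      (∀ Y : ℕ → ℝ → ℝ, IsViscousSolution β ν (Set.Icc 0 T) Y →
        (∀ n, 1 ≤ n → Y n 0 = x n) →
        (∃ C : ℝ, ∀ t ∈ Set.Icc (0 : ℝ) T, ∀ n, 1 ≤ n →
          lam n ^ (β - 2 + ε) * |Y n t| ≤ C) →
        ∀ n, 1 ≤ n → ∀ t ∈ Set.Icc (0 : ℝ) T, Y n t = X n t) := by
  obtain ⟨C, hC⟩ := hx
  set C0 : ℝ := max C 0 with hC0def
  have hC0nn : 0 ≤ C0 := le_max_right _ _
  have hC0 : ∀ n, 1 ≤ n → wt β ε n * |x n| ≤ C0 :=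
    fun n hn => (hC n hn).trans (le_max_left _ _)
  have hKpos : (0:ℝ) < E2 (β+2*ε)+4 := by have := E2_pos (β+2*ε); linarith
  have hC1pos : (0:ℝ) < C0 + 1 := by linarith
  set η : ℝ := 1/(4*(E2 (β+2*ε)+4)*(C0+1)^2) with hηdef
  have hηpos : 0 < η := by
    rw [hηdef]; apply div_pos one_pos; positivity
  have hηs : η * (2*(E2 (β+2*ε)+4) * (C0+1)^2) ≤ 1/2 := by
    rw [hηdef]
    rw [div_mul_eq_mul_div, div_le_iff₀ (by positivity : (0:ℝ) < 4*(E2 (β+2*ε)+4)*(C0+1)^2)]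
    ring_nf
    nlinarith [hKpos, hC1pos]
  obtain ⟨T, hTpos, hsm⟩ := choose_T ν ε η hν hε hηpos
  have hPE := picIter_est β ν ε x C0 T η hβ hν hε hC0 hC0nn hTpos hηpos.le hsm hηs
  have hB : ∀ k, ∀ t ∈ Set.Icc (0:ℝ) T, ∀ n, 1 ≤ n →
      wt β ε n * |picIter β ν x k n t| ≤ C0+1 := fun k => (hPE k).1
  have hD : DiffHyp β ν ε x C0 T := fun k => (hPE k).2
  refine ⟨T, hTpos, Xlim β ν x, ⟨?_, ?_, ⟨C0+1, ?_⟩⟩, ?_⟩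
  · -- solution
    intro n hn t ht
    have heq : -ν * lam n ^ 2 * Xlim β ν x n t
        + lam (n - 1) ^ β * (Xlim β ν x (n - 1) t) ^ 2
        - lam n ^ β * Xlim β ν x n t * Xlim β ν x (n + 1) t
        = -(ν * lam n ^ 2) * Xlim β ν x n t + Fn β (Xlim β ν x) n t := by
      unfold Fn; ring
    rw [heq]
    exact Xlim_ode hβ hν hε hC0nn hB hD hn ht
  · -- initial condition
    intro n hn
    exact Xlim_init hβ hν hε hC0nn hTpos.le hB hD hn
  · -- bound
    intro t ht n hn
    exact Xlim_bound hD hC0nn hB hn ht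
  · -- uniqueness
    intro Y hYsol hY0 hYbd
    obtain ⟨C', hC'⟩ := hYbd
    set B : ℝ := max (C0+1) (max C' 0) with hBdef
    have hBnn : 0 ≤ B := le_trans (by linarith) (le_max_left _ _)
    have hYc : ∀ m, 1 ≤ m → ContinuousOn (Y m) (Set.Icc 0 T) :=
      fun m hm t ht => (hYsol m hm t ht).continuousWithinAt
    have hXc : ∀ m, 1 ≤ m → ContinuousOn (Xlim β ν x m) (Set.Icc 0 T) :=
      fun m hm => Xlim_contOn hD hC0nn hm
    have hYb : ∀ t ∈ Set.Icc (0:ℝ) T, ∀ m, 1 ≤ m → wt β ε m * |Y m t| ≤ B :=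
      fun t ht m hm => (hC' t ht m hm).trans
        ((le_max_left C' 0).trans (le_max_right _ _))
    have hXb : ∀ t ∈ Set.Icc (0:ℝ) T, ∀ m, 1 ≤ m → wt β ε m * |Xlim β ν x m t| ≤ B :=
      fun t ht m hm => (Xlim_bound hD hC0nn hB hm ht).trans (le_max_left _ _)
    have hYsol' : ∀ n, 1 ≤ n → ∀ t ∈ Set.Icc (0:ℝ) T, HasDerivWithinAt (Y n)
        (-(ν * lam n ^ 2) * Y n t + Fn β Y n t) (Set.Icc 0 T) t := by
      intro n hn t ht
      have heq : -(ν * lam n ^ 2) * Y n t + Fn β Y n t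
          = -ν * lam n ^ 2 * Y n t + lam (n - 1) ^ β * (Y (n - 1) t) ^ 2
            - lam n ^ β * Y n t * Y (n + 1) t := by
        unfold Fn; ring
      rw [heq]
      exact hYsol n hn t ht
    have hYIE : ∀ n, 1 ≤ n → ∀ t ∈ Set.Icc (0:ℝ) T,
        Y n t = picardMap (ν * lam n ^ 2) (x n) (fun s => Fn β Y n s) t := by
      intro n hn t ht
      rw [← hY0 n hn]
      exact sol_IE hβ hν hYsol' hYc hn ht
    have hXIE : ∀ n, 1 ≤ n → ∀ t ∈ Set.Icc (0:ℝ) T,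
        Xlim β ν x n t = picardMap (ν * lam n ^ 2) (x n)
          (fun s => Fn β (Xlim β ν x) n s) t :=
      fun n hn t ht => Xlim_IE hβ hν hε hC0nn hB hD hn ht
    intro n hn t ht
    exact uniqueness_IE hβ hν hε hTpos.le hBnn hYc hXc hYb hXb hYIE hXIE t ht n hn
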